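/- Every Youden rectangle with λ = 1 yields, for every choice of removed column, a proper double array under the column-removal construction; i.e., the resulting array satisfies (TA1), (TA2), (TA3), (TA4), but there exist a row and a column sharing a number of symbols different from some other row-column pair (condition (TA5) fails). -/
import Mathlib


open Finset

/-- The set of symbols occurring in column `j` of a `k × n` array. -/
def colSet {k n : ℕ} (A : Fin k → Fin n → Fin n) (j : Fin n) : Finset (Fin n) :=
  Finset.univ.image fun i => A i j

section Aux

variable {n k : ℕ} {Y : Fin k → Fin n → Fin n}

lemma mem_colSet_iff {s j : Fin n} : s ∈ colSet Y j ↔ ∃ i, Y i j = s := by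
  simp [colSet]

lemma colSet_card (hcol : ∀ j : Fin n, Function.Injective fun i => Y i j)
    (j : Fin n) : (colSet Y j).card = k := by
  rw [colSet, Finset.card_image_of_injective _ (hcol j), Finset.card_univ,
    Fintype.card_fin]

/-- Each symbol appears in exactly `k` columns. -/
lemma symbol_cols_card (hrow : ∀ i, Function.Injective (Y i))
    (hcol : ∀ j : Fin n, Function.Injective fun i => Y i j) (s : Fin n) :
    (Finset.univ.filter fun j => s ∈ colSet Y j).card = k := by
  classical
  have hbij : ∀ i, Function.Bijective (Y i) := fun i =>
    Finite.injective_iff_bijective.mp (hrow i)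
  set e : Fin k → (Fin n ≃ Fin n) := fun i => Equiv.ofBijective (Y i) (hbij i)
    with he
  have happ : ∀ i j, e i j = Y i j := fun i j => rfl
  have himg : (Finset.univ.filter fun j => s ∈ colSet Y j) =
      Finset.univ.image fun i => (e i).symm s := by
    ext j
    simp only [Finset.mem_filter, Finset.mem_univ, true_and, Finset.mem_image,
      mem_colSet_iff]
    constructor
    · rintro ⟨i, hi⟩
      exact ⟨i, by rw [Equiv.symm_apply_eq, happ, hi]⟩
    · rintro ⟨i, hi⟩
      refine ⟨i, ?_⟩
      rw [← hi, ← happ, Equiv.apply_symm_apply]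
  rw [himg, Finset.card_image_of_injective, Finset.card_univ, Fintype.card_fin]
  intro i i' h
  have h' : (e i).symm s = (e i').symm s := h
  apply hcol ((e i).symm s)
  show Y i ((e i).symm s) = Y i' ((e i).symm s)
  calc Y i ((e i).symm s) = e i ((e i).symm s) := rfl
    _ = s := Equiv.apply_symm_apply _ _
    _ = e i' ((e i').symm s) := (Equiv.apply_symm_apply _ _).symm
    _ = Y i' ((e i').symm s) := rfl
    _ = Y i' ((e i).symm s) := by rw [h']

/-- In each row, the entries belonging to a fixed column's symbol set
occupy exactly `k` positions. -/
lemma row_meets_card (hrow : ∀ i, Function.Injective (Y i))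
    (hcol : ∀ j : Fin n, Function.Injective fun i => Y i j)
    (i : Fin k) (c : Fin n) :
    (Finset.univ.filter fun j => Y i j ∈ colSet Y c).card = k := by
  classical
  have hbij : Function.Bijective (Y i) := Finite.injective_iff_bijective.mp (hrow i)
  set e : Fin n ≃ Fin n := Equiv.ofBijective (Y i) hbij with he
  have happ : ∀ j, e j = Y i j := fun j => rfl
  have himg : (Finset.univ.filter fun j => Y i j ∈ colSet Y c) =
      (colSet Y c).image fun t => e.symm t := by
    ext j
    simp only [Finset.mem_filter, Finset.mem_univ, true_and, Finset.mem_image]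
    constructor
    · intro hj
      exact ⟨Y i j, hj, by rw [← happ, Equiv.symm_apply_apply]⟩
    · rintro ⟨t, ht, rfl⟩
      rwa [← happ, Equiv.apply_symm_apply]
  rw [himg, Finset.card_image_of_injective _ e.symm.injective, colSet_card hcol]

/-- If a finset has exactly one element, any two of its members coincide. -/
lemma eq_of_card_one {α : Type*} {S : Finset α} (h : S.card = 1) {a b : α}
    (ha : a ∈ S) (hb : b ∈ S) : a = b :=
  Finset.card_le_one.mp h.le a ha b hb

/-- Any two distinct symbols occur together in exactly one column
(dual design property). -/
lemma symbol_pair_card (hk : 1 < k) (hkn : k < n - 1)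
    (hlam : k * (k - 1) = n - 1)
    (hrow : ∀ i, Function.Injective (Y i))
    (hcol : ∀ j : Fin n, Function.Injective fun i => Y i j)
    (hdes : ∀ j j' : Fin n, j ≠ j' →
      ((colSet Y j) ∩ (colSet Y j')).card = 1)
    (s s' : Fin n) (hss : s ≠ s') :
    (Finset.univ.filter fun j => s ∈ colSet Y j ∧ s' ∈ colSet Y j).card = 1 := by
  classical
  have hn : 0 < n := lt_of_le_of_lt (Nat.zero_le _) (lt_of_lt_of_le hkn (Nat.sub_le _ _))
  -- upper bound: at most one column contains both
  have hle : ∀ t : Fin n, t ≠ s →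
      (Finset.univ.filter fun j => s ∈ colSet Y j ∧ t ∈ colSet Y j).card ≤ 1 := by
    intro t hts
    rw [Finset.card_le_one]
    intro j hj j' hj'
    simp only [Finset.mem_filter, Finset.mem_univ, true_and] at hj hj'
    by_contra hne
    have hsub : ({s, t} : Finset (Fin n)) ⊆ colSet Y j ∩ colSet Y j' := by
      intro x hx
      simp only [Finset.mem_insert, Finset.mem_singleton] at hx
      rcases hx with rfl | rfl <;>
        simp [Finset.mem_inter, hj.1, hj.2, hj'.1, hj'.2]
    have h2 : ({s, t} : Finset (Fin n)).card = 2 := by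
      rw [Finset.card_pair (Ne.symm hts)]
    have := Finset.card_le_card hsub
    rw [h2, hdes j j' hne] at this
    omega
  -- double count: over t ≠ s, the total number of coincidences is n - 1
  have hsum : ∑ t ∈ Finset.univ.erase s,
      (Finset.univ.filter fun j => s ∈ colSet Y j ∧ t ∈ colSet Y j).card
      = n - 1 := by
    have step1 : ∀ t : Fin n,
        (Finset.univ.filter fun j => s ∈ colSet Y j ∧ t ∈ colSet Y j).card
        = ∑ j : Fin n, if s ∈ colSet Y j ∧ t ∈ colSet Y j then 1 else 0 := by
      intro t
      rw [Finset.card_filter]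
    simp_rw [step1]
    rw [Finset.sum_comm]
    have step2 : ∀ j : Fin n,
        (∑ t ∈ Finset.univ.erase s,
          if s ∈ colSet Y j ∧ t ∈ colSet Y j then 1 else 0)
        = if s ∈ colSet Y j then k - 1 else 0 := by
      intro j
      by_cases hs : s ∈ colSet Y j
      · rw [if_pos hs]
        have : ((Finset.univ.erase s).filter fun t =>
            s ∈ colSet Y j ∧ t ∈ colSet Y j) = (colSet Y j).erase s := by
          ext t
          simp only [Finset.mem_filter, Finset.mem_erase, Finset.mem_univ,
            true_and, and_true]
          tauto
        rw [← Finset.card_filter, this, Finset.card_erase_of_mem hs,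
          colSet_card hcol]
      · rw [if_neg hs]
        apply Finset.sum_eq_zero
        intro t _
        simp [hs]
    simp_rw [step2]
    rw [← Finset.sum_filter, Finset.sum_const, symbol_cols_card hrow hcol,
      smul_eq_mul, hlam]
  -- conclude: each term equals 1
  by_contra hne
  have hlt : (Finset.univ.filter fun j =>
      s ∈ colSet Y j ∧ s' ∈ colSet Y j).card < 1 := by
    have := hle s' (Ne.symm hss)
    omega
  have hcard : (Finset.univ.erase s).card = n - 1 := by
    rw [Finset.card_erase_of_mem (Finset.mem_univ s), Finset.card_univ,
      Fintype.card_fin]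
  have hstrict : ∑ t ∈ Finset.univ.erase s,
      (Finset.univ.filter fun j => s ∈ colSet Y j ∧ t ∈ colSet Y j).card
      < ∑ _t ∈ Finset.univ.erase s, 1 := by
    apply Finset.sum_lt_sum
    · intro t ht
      exact hle t (Finset.ne_of_mem_erase ht)
    · exact ⟨s', by simp [Finset.mem_erase, Ne.symm hss], hlt⟩
  rw [hsum, Finset.sum_const, smul_eq_mul, mul_one, hcard] at hstrict
  omega

end Aux

/-- Theorem 3 of [NO15]: a Youden rectangle with `λ = 1` yields, for every
choice of removed column `c`, a proper double array: the resulting array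
(rows indexed by `Fin k`, columns by symbols not in column `c`, symbols by
columns `j ≠ c` of `Y`) is equireplicate with replication `k - 1` (TA2), has
constant row-pair intersections (TA3) and constant column-pair intersections
equal to `1` (TA4), but row-column intersections are not constant
(TA5 fails). -/
theorem youden_lambda_one_proper_double_array (n k : ℕ)
    (hk : 1 < k) (hkn : k < n - 1)
    (hlam : k * (k - 1) = n - 1)
    (Y : Fin k → Fin n → Fin n)
    (hrow : ∀ i, Function.Injective (Y i))
    (hcol : ∀ j : Fin n, Function.Injective fun i => Y i j)
    (hdes : ∀ j j' : Fin n, j ≠ j' →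
      ((colSet Y j) ∩ (colSet Y j')).card = 1) :
    ∀ c : Fin n,
      -- (TA2) each symbol of the constructed array occurs k - 1 times
      (∀ j : Fin n, j ≠ c → ((colSet Y j) \ (colSet Y c)).card = k - 1) ∧
      -- (TA3) any two distinct rows share a constant number of symbols
      (∃ lrr : ℕ, ∀ i i' : Fin k, i ≠ i' →
        (Finset.univ.filter fun j : Fin n =>
          j ≠ c ∧ Y i j ∉ colSet Y c ∧ Y i' j ∉ colSet Y c).card = lrr) ∧
      -- (TA4) any two distinct columns share exactly 1 symbol
      (∀ s s' : Fin n, s ∉ colSet Y c → s' ∉ colSet Y c → s ≠ s' →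
        (Finset.univ.filter fun j : Fin n =>
          j ≠ c ∧ s ∈ colSet Y j ∧ s' ∈ colSet Y j).card = 1) ∧
      -- (TA5) fails: row-column intersections are not all equal
      ¬ (∃ lrc : ℕ, ∀ (i : Fin k) (s : Fin n), s ∉ colSet Y c →
        (Finset.univ.filter fun j : Fin n =>
          j ≠ c ∧ Y i j ∉ colSet Y c ∧ s ∈ colSet Y j).card = lrc) := by
  classical
  intro c
  have hk3 : 3 ≤ k := by
    by_contra h
    push_neg at h
    have hk2 : k = 2 := by omega
    subst hk2
    simp at hlam
    omega
  -- TA2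
  have hTA2 : ∀ j : Fin n, j ≠ c →
      ((colSet Y j) \ (colSet Y c)).card = k - 1 := by
    intro j hj
    have h1 : (colSet Y j \ colSet Y c).card + (colSet Y j ∩ colSet Y c).card
        = (colSet Y j).card := Finset.card_sdiff_add_card_inter _ _
    rw [hdes j c hj, colSet_card hcol] at h1
    omega
  refine ⟨hTA2, ?_, ?_, ?_⟩
  · -- TA3
    refine ⟨n - 1 - 2 * (k - 1), ?_⟩
    intro i i' hii
    set A : Fin k → Finset (Fin n) :=
      fun i₀ => Finset.univ.filter fun j => j ≠ c ∧ Y i₀ j ∈ colSet Y c with hA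
    have hAcard : ∀ i₀, (A i₀).card = k - 1 := by
      intro i₀
      have h1 : A i₀ = (Finset.univ.filter fun j => Y i₀ j ∈ colSet Y c).erase c := by
        ext j
        simp only [hA, Finset.mem_filter, Finset.mem_erase, Finset.mem_univ, true_and]
      have hc : c ∈ Finset.univ.filter fun j => Y i₀ j ∈ colSet Y c := by
        simp only [Finset.mem_filter, Finset.mem_univ, true_and, mem_colSet_iff]
        exact ⟨i₀, rfl⟩
      rw [h1, Finset.card_erase_of_mem hc, row_meets_card hrow hcol]
    have hdisj : Disjoint (A i) (A i') := by
      rw [Finset.disjoint_left]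
      intro j hj hj'
      simp only [hA, Finset.mem_filter, Finset.mem_univ, true_and] at hj hj'
      have hsub : ({Y i j, Y i' j} : Finset (Fin n)) ⊆
          colSet Y j ∩ colSet Y c := by
        intro x hx
        simp only [Finset.mem_insert, Finset.mem_singleton] at hx
        rcases hx with rfl | rfl
        · exact Finset.mem_inter.mpr ⟨mem_colSet_iff.mpr ⟨i, rfl⟩, hj.2⟩
        · exact Finset.mem_inter.mpr ⟨mem_colSet_iff.mpr ⟨i', rfl⟩, hj'.2⟩
      have hne : Y i j ≠ Y i' j := fun h => hii (hcol j h)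
      have h2 := Finset.card_le_card hsub
      rw [Finset.card_pair hne, hdes j c hj.1] at h2
      omega
    have hsplit : (Finset.univ.filter fun j : Fin n =>
        j ≠ c ∧ Y i j ∉ colSet Y c ∧ Y i' j ∉ colSet Y c)
        = (Finset.univ.filter fun j => j ≠ c) \ (A i ∪ A i') := by
      ext j
      simp only [hA, Finset.mem_sdiff, Finset.mem_union, Finset.mem_filter,
        Finset.mem_univ, true_and]
      tauto
    have hsub : A i ∪ A i' ⊆ Finset.univ.filter fun j => j ≠ c := by
      intro j hj
      simp only [hA, Finset.mem_union, Finset.mem_filter, Finset.mem_univ,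
        true_and] at hj ⊢
      tauto
    rw [hsplit, Finset.card_sdiff_of_subset hsub, Finset.card_union_of_disjoint hdisj,
      hAcard, hAcard]
    have hfc : (Finset.univ.filter fun j : Fin n => j ≠ c).card = n - 1 := by
      rw [Finset.filter_ne', Finset.card_erase_of_mem (Finset.mem_univ c),
        Finset.card_univ, Fintype.card_fin]
    rw [hfc]
    omega
  · -- TA4
    intro s s' hs hs' hss
    have h1 : (Finset.univ.filter fun j : Fin n =>
        j ≠ c ∧ s ∈ colSet Y j ∧ s' ∈ colSet Y j)
        = Finset.univ.filter fun j => s ∈ colSet Y j ∧ s' ∈ colSet Y j := by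
      apply Finset.filter_congr
      intro j _
      exact ⟨fun h => ⟨h.2.1, h.2.2⟩,
        fun h => ⟨fun hj => hs (hj ▸ h.1), h.1, h.2⟩⟩
    rw [h1]
    exact symbol_pair_card hk hkn hlam hrow hcol hdes s s' hss
  · -- TA5 fails
    rintro ⟨lrc, hl⟩
    have hbij : Function.Bijective (Y ⟨0, by omega⟩) :=
      Finite.injective_iff_bijective.mp (hrow _)
    set i : Fin k := ⟨0, by omega⟩ with hi
    set e : Fin n ≃ Fin n := Equiv.ofBijective (Y i) hbij with he
    have happ : ∀ j, e j = Y i j := fun j => rfl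
    -- the count formula: for s ∉ colSet Y c the row-column count is
    -- k minus the number of columns containing s whose row-i entry is in colSet Y c
    have hcount : ∀ s : Fin n, s ∉ colSet Y c →
        (Finset.univ.filter fun j : Fin n =>
          j ≠ c ∧ Y i j ∉ colSet Y c ∧ s ∈ colSet Y j).card
        = k - (Finset.univ.filter fun j =>
            s ∈ colSet Y j ∧ Y i j ∈ colSet Y c).card := by
      intro s hs
      set S := Finset.univ.filter fun j => s ∈ colSet Y j with hS
      set T := Finset.univ.filter fun j =>
        s ∈ colSet Y j ∧ Y i j ∈ colSet Y c with hT
      have hTsub : T ⊆ S := by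
        intro j hj
        simp only [hS, hT, Finset.mem_filter, Finset.mem_univ, true_and] at hj ⊢
        exact hj.1
      have heq : (Finset.univ.filter fun j : Fin n =>
          j ≠ c ∧ Y i j ∉ colSet Y c ∧ s ∈ colSet Y j) = S \ T := by
        ext j
        simp only [hS, hT, Finset.mem_sdiff, Finset.mem_filter, Finset.mem_univ,
          true_and]
        constructor
        · tauto
        · rintro ⟨h1, h2⟩
          have hjc : j ≠ c := by
            rintro rfl
            exact hs h1
          tauto
      rw [heq, Finset.card_sdiff_of_subset hTsub, hS, symbol_cols_card hrow hcol]
    -- pick two symbols of colSet Y c different from Y i c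
    have hCcard : (colSet Y c).card = k := colSet_card hcol c
    have hYic : Y i c ∈ colSet Y c := mem_colSet_iff.mpr ⟨i, rfl⟩
    have hD : 1 < ((colSet Y c).erase (Y i c)).card := by
      rw [Finset.card_erase_of_mem hYic, hCcard]
      omega
    obtain ⟨t₀, ht₀, t', ht', htt⟩ := Finset.one_lt_card.mp hD
    obtain ⟨ht₀c, ht₀C⟩ := Finset.mem_erase.mp ht₀
    obtain ⟨ht'c, ht'C⟩ := Finset.mem_erase.mp ht'
    set j₁ : Fin n := e.symm t₀ with hj₁
    set j₂ : Fin n := e.symm t' with hj₂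
    have hYj₁ : Y i j₁ = t₀ := by rw [← happ, hj₁, Equiv.apply_symm_apply]
    have hYj₂ : Y i j₂ = t' := by rw [← happ, hj₂, Equiv.apply_symm_apply]
    have hj₁c : j₁ ≠ c := fun h => ht₀c (by rw [← hYj₁, h])
    have hj₂c : j₂ ≠ c := fun h => ht'c (by rw [← hYj₂, h])
    have hj₁₂ : j₁ ≠ j₂ := fun h => htt (by rw [← hYj₁, ← hYj₂, h])
    -- the common symbol u of columns j₁ and j₂
    have hint : (colSet Y j₁ ∩ colSet Y j₂).card = 1 := hdes j₁ j₂ hj₁₂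
    obtain ⟨u, hu⟩ := Finset.card_eq_one.mp hint
    have hu₁ : u ∈ colSet Y j₁ := by
      have : u ∈ colSet Y j₁ ∩ colSet Y j₂ := hu ▸ Finset.mem_singleton_self u
      exact (Finset.mem_inter.mp this).1
    have hu₂ : u ∈ colSet Y j₂ := by
      have : u ∈ colSet Y j₁ ∩ colSet Y j₂ := hu ▸ Finset.mem_singleton_self u
      exact (Finset.mem_inter.mp this).2
    have ht₀j₁ : t₀ ∈ colSet Y j₁ := mem_colSet_iff.mpr ⟨i, hYj₁⟩
    have ht'j₂ : t' ∈ colSet Y j₂ := mem_colSet_iff.mpr ⟨i, hYj₂⟩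
    have huC : u ∉ colSet Y c := by
      intro huC
      have h1 : u = t₀ := eq_of_card_one (hdes j₁ c hj₁c)
        (Finset.mem_inter.mpr ⟨hu₁, huC⟩) (Finset.mem_inter.mpr ⟨ht₀j₁, ht₀C⟩)
      have h2 : u = t' := eq_of_card_one (hdes j₂ c hj₂c)
        (Finset.mem_inter.mpr ⟨hu₂, huC⟩) (Finset.mem_inter.mpr ⟨ht'j₂, ht'C⟩)
      exact htt (h1 ▸ h2)
    -- the count for (i, u) is at most k - 2
    have hTu : 2 ≤ (Finset.univ.filter fun j =>
        u ∈ colSet Y j ∧ Y i j ∈ colSet Y c).card := by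
      have hsub : ({j₁, j₂} : Finset (Fin n)) ⊆
          Finset.univ.filter fun j => u ∈ colSet Y j ∧ Y i j ∈ colSet Y c := by
        intro x hx
        simp only [Finset.mem_insert, Finset.mem_singleton] at hx
        rcases hx with rfl | rfl
        · simp only [Finset.mem_filter, Finset.mem_univ, true_and]
          exact ⟨hu₁, hYj₁ ▸ ht₀C⟩
        · simp only [Finset.mem_filter, Finset.mem_univ, true_and]
          exact ⟨hu₂, hYj₂ ▸ ht'C⟩
      have := Finset.card_le_card hsub
      rwa [Finset.card_pair hj₁₂] at this
    have hlu := hl i u huC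
    rw [hcount u huC] at hlu
    -- find a good symbol s in colSet Y j₁ \ colSet Y c avoiding the bad set
    set f : Fin n → Fin n := fun t =>
      if h : (colSet Y j₁ ∩ colSet Y (e.symm t)).Nonempty then h.choose else t₀
      with hf
    set Bad : Finset (Fin n) :=
      (((colSet Y c).erase (Y i c)).erase t₀).image f with hBad
    have hBadcard : Bad.card ≤ k - 2 := by
      calc Bad.card ≤ (((colSet Y c).erase (Y i c)).erase t₀).card :=
            Finset.card_image_le
        _ = k - 2 := by
            rw [Finset.card_erase_of_mem (Finset.mem_erase.mpr ⟨ht₀c, ht₀C⟩),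
              Finset.card_erase_of_mem hYic, hCcard]
            omega
    have hGex : ∃ s, s ∈ (colSet Y j₁ \ colSet Y c) \ Bad := by
      have h1 : (colSet Y j₁ \ colSet Y c).card = k - 1 := hTA2 j₁ hj₁c
      have h2 := Finset.card_le_card_sdiff_add_card
        (s := colSet Y j₁ \ colSet Y c) (t := Bad)
      have h3 : 0 < ((colSet Y j₁ \ colSet Y c) \ Bad).card := by omega
      obtain ⟨s, hs⟩ := Finset.card_pos.mp h3
      exact ⟨s, hs⟩
    obtain ⟨s, hsmem⟩ := hGex
    obtain ⟨hs₁, hsBad⟩ := Finset.mem_sdiff.mp hsmem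
    obtain ⟨hsj₁, hsC⟩ := Finset.mem_sdiff.mp hs₁
    -- the count for (i, s) is exactly k - 1
    have hTs : (Finset.univ.filter fun j =>
        s ∈ colSet Y j ∧ Y i j ∈ colSet Y c).card = 1 := by
      rw [Finset.card_eq_one]
      refine ⟨j₁, ?_⟩
      ext j
      simp only [Finset.mem_filter, Finset.mem_univ, true_and,
        Finset.mem_singleton]
      constructor
      · rintro ⟨hsj, hYjC⟩
        set t : Fin n := Y i j with ht
        have hpt : e.symm t = j := by rw [ht, ← happ, Equiv.symm_apply_apply]
        by_cases ht0 : t = t₀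
        · rw [← hpt, ht0]
        · by_cases htc : t = Y i c
          · exfalso
            have : j = c := hrow i htc
            rw [this] at hsj
            exact hsC hsj
          · exfalso
            have htmem : t ∈ ((colSet Y c).erase (Y i c)).erase t₀ :=
              Finset.mem_erase.mpr ⟨ht0, Finset.mem_erase.mpr ⟨htc, hYjC⟩⟩
            have hjj₁ : j ≠ j₁ := by
              rintro rfl
              exact ht0 (hYj₁ ▸ rfl)
            have hne : (colSet Y j₁ ∩ colSet Y (e.symm t)).Nonempty := by
              rw [hpt]
              exact ⟨s, Finset.mem_inter.mpr ⟨hsj₁, hsj⟩⟩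
            have hne' : (colSet Y j₁ ∩ colSet Y j).Nonempty :=
              ⟨s, Finset.mem_inter.mpr ⟨hsj₁, hsj⟩⟩
            have hfval : f t = s := by
              have hgoal : f t = if h : (colSet Y j₁ ∩ colSet Y j).Nonempty
                  then h.choose else t₀ := by
                rw [hf]
                simp only [hpt]
              rw [hgoal, dif_pos hne']
              exact eq_of_card_one (hdes j₁ j (Ne.symm hjj₁)) hne'.choose_spec
                (Finset.mem_inter.mpr ⟨hsj₁, hsj⟩)
            exact hsBad (Finset.mem_image.mpr ⟨t, htmem, hfval⟩)
      · rintro rfl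
        exact ⟨hsj₁, hYj₁ ▸ ht₀C⟩
    have hls := hl i s hsC
    rw [hcount s hsC, hTs] at hls
    omega
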